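/- Let φ(x) = b·x + ∫_{(0,∞)} (1 - e^{-xy}) ν(dy) be a Bernstein function with φ(1) = 1, and let R be a random variable with P(R = m) = c(φ,m) as above. Then for all t ≥ 0, E[e^{-tR}] ≤ e^{-φ(t)}. -/

import Mathlib

open MeasureTheory Set

private lemma exp_conv {x z : ℝ} (hx : 0 ≤ x) (hxz : x ≤ z) :
    x * (1 - Real.exp (-z)) ≤ z * (1 - Real.exp (-x)) := by
  rcases eq_or_lt_of_le (hx.trans hxz) with hz | hz
  · have hx0 : x = 0 := le_antisymm (hxz.trans hz.symm.le) hx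
    simp [hx0, ← hz]
  · have hl0 : 0 ≤ x / z := div_nonneg hx hz.le
    have hl1 : (0:ℝ) ≤ 1 - x / z := by
      have : x / z ≤ 1 := (div_le_one hz).2 hxz
      linarith
    have key := convexOn_exp.2 (mem_univ (-z)) (mem_univ (0:ℝ)) hl0 hl1 (by ring)
    simp only [smul_eq_mul, mul_zero, add_zero, Real.exp_zero, mul_one] at key
    have hxz' : x / z * -z = -x := by field_simp
    rw [hxz'] at key
    have h6 : z * Real.exp (-x) ≤ z * (x / z * Real.exp (-z) + (1 - x / z)) :=
      mul_le_mul_of_nonneg_left key hz.le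
    have h7 : z * (x / z * Real.exp (-z) + (1 - x / z)) = x * Real.exp (-z) + (z - x) := by
      field_simp
    rw [h7] at h6
    nlinarith

private lemma scalar_ineq {t a : ℝ} (ht : 0 < t) (hta : t ≤ a) :
    t ≤ t * Real.exp (-a) + a * (1 - Real.exp (-t)) := by
  have h1 : (t - a) + 1 ≤ Real.exp (t - a) := Real.add_one_le_exp _
  have h2 : Real.exp (-a) = Real.exp (t - a) * Real.exp (-t) := by
    rw [← Real.exp_add]; ring_nf
  have h3 : t + 1 ≤ Real.exp t := Real.add_one_le_exp t
  have hE : 0 < Real.exp (-t) := Real.exp_pos _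
  have h4 : (1 + t) * Real.exp (-t) ≤ 1 := by
    rw [Real.exp_neg, mul_inv_le_iff₀' (Real.exp_pos t)]
    nlinarith
  have h5 : (1 + t - a) * Real.exp (-t) ≤ Real.exp (-a) := by
    rw [h2]
    have := mul_le_mul_of_nonneg_right h1 hE.le
    linarith
  nlinarith [mul_le_mul_of_nonneg_left h5 ht.le,
    mul_nonneg (sub_nonneg.2 hta) (by nlinarith : (0:ℝ) ≤ 1 - Real.exp (-t) - t * Real.exp (-t))]

private lemma one_sub_exp_le {u : ℝ} (hu : 0 ≤ u) : 1 - Real.exp (-u) ≤ u := by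
  have := Real.add_one_le_exp (-u)
  linarith

private lemma integ_one_sub_exp (ν : Measure ℝ)
    (hν : ∫⁻ y in Ioi (0:ℝ), ENNReal.ofReal (min 1 y) ∂ν ≠ ⊤)
    {x : ℝ} (hx : 0 ≤ x) :
    IntegrableOn (fun y => 1 - Real.exp (-x * y)) (Ioi (0:ℝ)) ν := by
  constructor
  · exact (Continuous.aestronglyMeasurable (by continuity))
  · show (∫⁻ y in Ioi (0:ℝ), (‖1 - Real.exp (-x * y)‖₊ : ENNReal) ∂ν) < ⊤
    have hbound : ∀ y ∈ Ioi (0:ℝ),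
        (‖1 - Real.exp (-x * y)‖₊ : ENNReal) ≤
          ENNReal.ofReal (max 1 x) * ENNReal.ofReal (min 1 y) := by
      intro y hy
      have hy0 : 0 < y := hy
      have he1 : Real.exp (-x * y) ≤ 1 := by
        apply Real.exp_le_one_iff.2; nlinarith
      have he0 : 0 < Real.exp (-x * y) := Real.exp_pos _
      have hnn : (0:ℝ) ≤ 1 - Real.exp (-x * y) := by linarith
      rw [← enorm_eq_nnnorm, Real.enorm_eq_ofReal hnn, ← ENNReal.ofReal_mul (le_max_left 1 x |>.trans' zero_le_one)]
      apply ENNReal.ofReal_le_ofReal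
      rcases le_total y 1 with h | h
      · have : 1 - Real.exp (-x * y) ≤ x * y := by
          have := one_sub_exp_le (u := x * y) (by positivity)
          rw [← neg_mul] at this; linarith
        calc 1 - Real.exp (-x * y) ≤ x * y := this
          _ ≤ max 1 x * y := by nlinarith [le_max_right 1 x]
          _ = max 1 x * min 1 y := by rw [min_eq_right h]
      · calc 1 - Real.exp (-x * y) ≤ 1 := by linarith
          _ ≤ max 1 x := le_max_left 1 x
          _ = max 1 x * min 1 y := by rw [min_eq_left h, mul_one]
    calc ∫⁻ y in Ioi (0:ℝ), (‖1 - Real.exp (-x * y)‖₊ : ENNReal) ∂ν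
        ≤ ∫⁻ y in Ioi (0:ℝ), ENNReal.ofReal (max 1 x) * ENNReal.ofReal (min 1 y) ∂ν := by
          apply setLIntegral_mono' measurableSet_Ioi hbound
      _ = ENNReal.ofReal (max 1 x) * ∫⁻ y in Ioi (0:ℝ), ENNReal.ofReal (min 1 y) ∂ν := by
          rw [lintegral_const_mul' _ _ ENNReal.ofReal_ne_top]
      _ < ⊤ := ENNReal.mul_lt_top ENNReal.ofReal_lt_top hν.lt_top

private lemma superhom (b : ℝ) (ν : Measure ℝ)
    (hν : ∫⁻ y in Ioi (0:ℝ), ENNReal.ofReal (min 1 y) ∂ν ≠ ⊤)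
    (φ : ℝ → ℝ)
    (hφ : ∀ x : ℝ, 0 ≤ x → φ x = b * x + ∫ y in Ioi (0:ℝ), (1 - Real.exp (-x * y)) ∂ν)
    {u t : ℝ} (hu : 0 ≤ u) (hut : u ≤ t) : u * φ t ≤ t * φ u := by
  have ht : 0 ≤ t := hu.trans hut
  rw [hφ u hu, hφ t ht]
  have hIu := integ_one_sub_exp ν hν hu
  have hIt := integ_one_sub_exp ν hν ht
  have key : ∫ y in Ioi (0:ℝ), u * (1 - Real.exp (-t * y)) ∂ν
      ≤ ∫ y in Ioi (0:ℝ), t * (1 - Real.exp (-u * y)) ∂ν := by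
    apply setIntegral_mono_on (hIt.const_mul u) (hIu.const_mul t) measurableSet_Ioi
    intro y hy
    have hy0 : (0:ℝ) < y := hy
    have := exp_conv (x := u * y) (z := t * y) (by positivity) (by nlinarith)
    rw [neg_mul, neg_mul]
    nlinarith [this]
  rw [integral_const_mul, integral_const_mul] at key
  nlinarith [key]

private lemma pow_exp_bound {y : ℝ} (hy : 0 < y) (m : ℕ) (hm : 1 ≤ m) :
    y ^ m * Real.exp (-y) ≤ ((m+1).factorial : ℝ) * min 1 y := by
  have hfac1 : (1:ℝ) ≤ ((m+1).factorial : ℝ) := by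
    exact_mod_cast Nat.one_le_iff_ne_zero.2 (Nat.factorial_ne_zero _)
  have hE0 : 0 < Real.exp (-y) := Real.exp_pos _
  have hE1 : Real.exp (-y) ≤ 1 := Real.exp_le_one_iff.2 (by linarith)
  rcases le_total y 1 with h | h
  · have h1 : y ^ m ≤ y ^ 1 := pow_le_pow_of_le_one hy.le h hm
    rw [min_eq_right h]
    have : y ^ m * Real.exp (-y) ≤ y := by
      calc y ^ m * Real.exp (-y) ≤ y ^ m * 1 := by
            apply mul_le_mul_of_nonneg_left hE1 (by positivity)
        _ = y ^ m := mul_one _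
        _ ≤ y := by simpa using h1
    nlinarith
  · rw [min_eq_left h]
    -- y^{m+1} ≤ (m+1)! * exp y
    have hkey : y ^ (m+1) / ((m+1).factorial : ℝ) ≤ Real.exp y := by
      calc y ^ (m+1) / ((m+1).factorial : ℝ)
          ≤ ∑ i ∈ Finset.range (m+2), y ^ i / (i.factorial : ℝ) := by
            apply Finset.single_le_sum (f := fun i => y ^ i / (i.factorial : ℝ))
              (fun i _ => by positivity) (Finset.self_mem_range_succ (m+1))
        _ ≤ Real.exp y := Real.sum_le_exp_of_nonneg (by linarith) _
    have hfac0 : (0:ℝ) < ((m+1).factorial : ℝ) := by linarith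
    have h2 : y ^ (m+1) ≤ ((m+1).factorial : ℝ) * Real.exp y := by
      rw [div_le_iff₀ hfac0] at hkey; linarith [hkey]
    -- y^m * exp(-y) = y^{m+1} * exp(-y) / y ≤ (m+1)! / y ≤ (m+1)!
    have hy1 : 1 ≤ y := h
    have h3 : y ^ (m+1) = y * y ^ m := by ring
    have h4 : y ^ m * Real.exp (-y) * y ≤ ((m+1).factorial : ℝ) := by
      have hexp : Real.exp (-y) * Real.exp y = 1 := by
        rw [← Real.exp_add]; simp
      calc y ^ m * Real.exp (-y) * y = y ^ (m+1) * Real.exp (-y) := by ring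
        _ ≤ ((m+1).factorial : ℝ) * Real.exp y * Real.exp (-y) :=
            mul_le_mul_of_nonneg_right h2 hE0.le
        _ = ((m+1).factorial : ℝ) := by rw [mul_assoc, mul_comm (Real.exp y), hexp, mul_one]
    rw [mul_one]
    calc y ^ m * Real.exp (-y) ≤ y ^ m * Real.exp (-y) * y := by nlinarith [mul_nonneg (mul_nonneg (pow_pos hy m).le hE0.le) (sub_nonneg.2 hy1)]
      _ ≤ _ := h4

private lemma integ_pow_exp (ν : Measure ℝ)
    (hν : ∫⁻ y in Ioi (0:ℝ), ENNReal.ofReal (min 1 y) ∂ν ≠ ⊤)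
    {m : ℕ} (hm : 1 ≤ m) :
    IntegrableOn (fun y => y ^ m * Real.exp (-y)) (Ioi (0:ℝ)) ν := by
  constructor
  · exact (Continuous.aestronglyMeasurable (by continuity))
  · show (∫⁻ y in Ioi (0:ℝ), (‖y ^ m * Real.exp (-y)‖₊ : ENNReal) ∂ν) < ⊤
    calc ∫⁻ y in Ioi (0:ℝ), (‖y ^ m * Real.exp (-y)‖₊ : ENNReal) ∂ν
        ≤ ∫⁻ y in Ioi (0:ℝ),
            ENNReal.ofReal ((m+1).factorial : ℝ) * ENNReal.ofReal (min 1 y) ∂ν := by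
          apply setLIntegral_mono' measurableSet_Ioi
          intro y hy
          have hy0 : (0:ℝ) < y := hy
          have hnn : (0:ℝ) ≤ y ^ m * Real.exp (-y) := by positivity
          rw [← enorm_eq_nnnorm, Real.enorm_eq_ofReal hnn, ← ENNReal.ofReal_mul (by positivity)]
          exact ENNReal.ofReal_le_ofReal (pow_exp_bound hy0 m hm)
      _ = ENNReal.ofReal ((m+1).factorial : ℝ) * ∫⁻ y in Ioi (0:ℝ), ENNReal.ofReal (min 1 y) ∂ν := by
          rw [lintegral_const_mul' _ _ ENNReal.ofReal_ne_top]
      _ < ⊤ := ENNReal.mul_lt_top ENNReal.ofReal_lt_top hν.lt_top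

private lemma key_ineq (b : ℝ) (ν : Measure ℝ)
    (hν : ∫⁻ y in Ioi (0:ℝ), ENNReal.ofReal (min 1 y) ∂ν ≠ ⊤)
    (φ : ℝ → ℝ)
    (hφ : ∀ x : ℝ, 0 ≤ x → φ x = b * x + ∫ y in Ioi (0:ℝ), (1 - Real.exp (-x * y)) ∂ν)
    (hφ1 : φ 1 = 1) {t : ℝ} (ht : 0 ≤ t) :
    1 - φ (1 - Real.exp (-t)) ≤ Real.exp (-φ t) := by
  have hφ0 : φ 0 = 0 := by
    rw [hφ 0 le_rfl]
    simp
  rcases eq_or_lt_of_le ht with h0 | ht'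
  · rw [← h0]
    simp [hφ0]
  have hE1 : Real.exp (-t) ≤ 1 := Real.exp_le_one_iff.2 (by linarith)
  have hE0 : 0 < Real.exp (-t) := Real.exp_pos _
  have hs0 : 0 ≤ 1 - Real.exp (-t) := by linarith
  have hst : 1 - Real.exp (-t) ≤ t := one_sub_exp_le ht
  rcases le_total (φ t) t with h | h
  · have h1 := superhom b ν hν φ hφ hs0 (by linarith : 1 - Real.exp (-t) ≤ 1)
    rw [hφ1, mul_one, one_mul] at h1
    have h2 : Real.exp (-t) ≤ Real.exp (-φ t) := Real.exp_le_exp.2 (by linarith)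
    linarith
  · have h1 := superhom b ν hν φ hφ hs0 hst
    have h2 := scalar_ineq ht' h
    have h3 : t * (1 - φ (1 - Real.exp (-t))) ≤ t * Real.exp (-φ t) := by nlinarith
    exact (mul_le_mul_iff_right₀ ht').1 h3

theorem laplace_transform_R_le (b : ℝ) (hb : 0 ≤ b) (ν : Measure ℝ)
    (hν : ∫⁻ y in Ioi (0:ℝ), ENNReal.ofReal (min 1 y) ∂ν ≠ ⊤)
    (φ : ℝ → ℝ)
    (hφ : ∀ x : ℝ, 0 ≤ x → φ x = b * x + ∫ y in Ioi (0:ℝ), (1 - Real.exp (-x * y)) ∂ν)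
    (hφ1 : φ 1 = 1)
    (c : ℕ → ℝ)
    (hc : ∀ m : ℕ, 1 ≤ m → c m =
      (1 / (Nat.factorial m : ℝ)) * ∫ y in Ioi (0:ℝ), y ^ m * Real.exp (-y) ∂ν
        + if m = 1 then b else 0)
    {Ω : Type*} [MeasurableSpace Ω] (μ : Measure Ω) [IsProbabilityMeasure μ]
    (R : Ω → ℕ) (hR : Measurable R) (hRpos : ∀ ω, 1 ≤ R ω)
    (hRlaw : ∀ m : ℕ, 1 ≤ m → μ {ω | R ω = m} = ENNReal.ofReal (c m)) :
    ∀ t : ℝ, 0 ≤ t →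
      ∫ ω, Real.exp (-t * (R ω : ℝ)) ∂μ ≤ Real.exp (-φ t) := by
  intro t ht
  set s : ℝ := Real.exp (-t) with hs_def
  have hs0 : 0 < s := Real.exp_pos _
  have hs1 : s ≤ 1 := Real.exp_le_one_iff.2 (by linarith)
  have h1s : 0 ≤ 1 - s := by linarith
  -- the family of functions
  set f : ℕ → ℝ → ℝ := fun n y =>
    if n = 0 then 0 else (Real.exp (-t * (n:ℝ)) / (n.factorial : ℝ)) * (y ^ n * Real.exp (-y))
    with hf_def
  have hAnn : ∀ n : ℕ, (0:ℝ) ≤ (1 / (n.factorial : ℝ)) * ∫ y in Ioi (0:ℝ), y ^ n * Real.exp (-y) ∂ν := by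
    intro n
    apply mul_nonneg (by positivity)
    apply setIntegral_nonneg measurableSet_Ioi
    intro y hy
    have hy0 : (0:ℝ) < y := hy
    positivity
  -- Step 1: reduce the Bochner integral to a lintegral
  have hmeas : Measurable fun ω => Real.exp (-t * (R ω : ℝ)) :=
    (measurable_from_top (f := fun n : ℕ => Real.exp (-t * (n:ℝ)))).comp hR
  have step1 : ∫ ω, Real.exp (-t * (R ω : ℝ)) ∂μ
      = (∫⁻ ω, ENNReal.ofReal (Real.exp (-t * (R ω : ℝ))) ∂μ).toReal := by
    exact integral_eq_lintegral_of_nonneg_ae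
      (Filter.Eventually.of_forall fun ω => (Real.exp_pos _).le) hmeas.aestronglyMeasurable
  -- Step 2: lintegral as a sum over the law of R
  have step2 : ∫⁻ ω, ENNReal.ofReal (Real.exp (-t * (R ω : ℝ))) ∂μ
      = ∑' n : ℕ, ENNReal.ofReal (Real.exp (-t * (n:ℝ))) * μ {ω | R ω = n} := by
    rw [← lintegral_map (f := fun n : ℕ => ENNReal.ofReal (Real.exp (-t * (n:ℝ))))
      measurable_from_top hR, lintegral_countable']
    apply tsum_congr
    intro n
    rw [Measure.map_apply hR (measurableSet_singleton n)]
    rfl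
  -- Step 3: compute each term
  have step3 : ∀ n : ℕ, ENNReal.ofReal (Real.exp (-t * (n:ℝ))) * μ {ω | R ω = n}
      = (if n = 1 then ENNReal.ofReal (s * b) else 0)
        + ∫⁻ y in Ioi (0:ℝ), ENNReal.ofReal (f n y) ∂ν := by
    intro n
    rcases Nat.eq_zero_or_pos n with hn | hn
    · subst hn
      have hempty : {ω | R ω = 0} = (∅ : Set Ω) := by
        ext ω; simp only [mem_setOf_eq, mem_empty_iff_false, iff_false]
        exact fun h => by have := hRpos ω; omega
      simp [hempty, hf_def]
    · have hn1 : 1 ≤ n := hn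
      rw [hRlaw n hn1, hc n hn1]
      have hBnn : (0:ℝ) ≤ if n = 1 then b else 0 := by split <;> simp [hb]
      rw [ENNReal.ofReal_add (hAnn n) hBnn, mul_add]
      have hterm2 : ENNReal.ofReal (Real.exp (-t * (n:ℝ))) * ENNReal.ofReal (if n = 1 then b else 0)
          = (if n = 1 then ENNReal.ofReal (s * b) else 0) := by
        split
        next h => subst h; rw [← ENNReal.ofReal_mul (Real.exp_pos _).le]; norm_num; rfl
        next h => simp
      have hterm1 : ENNReal.ofReal (Real.exp (-t * (n:ℝ)))
            * ENNReal.ofReal ((1 / (n.factorial : ℝ)) * ∫ y in Ioi (0:ℝ), y ^ n * Real.exp (-y) ∂ν)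
          = ∫⁻ y in Ioi (0:ℝ), ENNReal.ofReal (f n y) ∂ν := by
        have hint := integ_pow_exp ν hν hn1
        have hofint : ENNReal.ofReal (∫ y in Ioi (0:ℝ), y ^ n * Real.exp (-y) ∂ν)
            = ∫⁻ y in Ioi (0:ℝ), ENNReal.ofReal (y ^ n * Real.exp (-y)) ∂ν :=
          ofReal_integral_eq_lintegral_ofReal hint
            ((ae_restrict_iff' measurableSet_Ioi).2 (Filter.Eventually.of_forall
              fun y hy => by have hy0 : (0:ℝ) < y := hy; positivity))
        rw [ENNReal.ofReal_mul (by positivity), ← mul_assoc, ← ENNReal.ofReal_mul (Real.exp_pos _).le,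
          hofint, ← lintegral_const_mul' _ _ ENNReal.ofReal_ne_top]
        apply lintegral_congr
        intro y
        rw [← ENNReal.ofReal_mul (by positivity)]
        congr 1
        simp only [hf_def]
        rw [if_neg (by omega)]
        ring
      rw [hterm1, hterm2]
      ring
  -- Step 4: sum the series
  have hmeasf : ∀ n : ℕ, AEMeasurable (fun y => ENNReal.ofReal (f n y)) (ν.restrict (Ioi 0)) := by
    intro n
    apply Measurable.aemeasurable
    apply ENNReal.measurable_ofReal.comp
    rcases Nat.eq_zero_or_pos n with hn | hn
    · subst hn; simp only [hf_def, if_pos rfl]; exact measurable_const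
    · simp only [hf_def, if_neg (by omega : ¬ n = 0)]
      exact (continuous_const.mul ((continuous_pow n).mul
        (Real.continuous_exp.comp continuous_neg))).measurable
  have step4 : ∑' n : ℕ, ((if n = 1 then ENNReal.ofReal (s * b) else 0)
        + ∫⁻ y in Ioi (0:ℝ), ENNReal.ofReal (f n y) ∂ν)
      = ENNReal.ofReal (s * b)
        + ∫⁻ y in Ioi (0:ℝ), ENNReal.ofReal (Real.exp (-(1-s) * y) - Real.exp (-1 * y)) ∂ν := by
    rw [ENNReal.tsum_add]
    congr 1
    · exact tsum_ite_eq 1 (fun _ => ENNReal.ofReal (s * b))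
    · rw [← lintegral_tsum hmeasf]
      apply setLIntegral_congr_fun measurableSet_Ioi
      intro y hy
      have hy0 : (0:ℝ) < y := hy
      -- pointwise: sum the exponential series
      have hsum1 : Summable fun n : ℕ => (s * y) ^ n / (n.factorial : ℝ) * Real.exp (-y) :=
        (Real.summable_pow_div_factorial (s * y)).mul_right _
      have hsum2 : Summable fun n : ℕ => if n = 0 then Real.exp (-y) else 0 :=
        (hasSum_ite_eq 0 (Real.exp (-y))).summable
      have hfe : ∀ n : ℕ, f n y
          = (s * y) ^ n / (n.factorial : ℝ) * Real.exp (-y) - (if n = 0 then Real.exp (-y) else 0) := by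
        intro n
        rcases Nat.eq_zero_or_pos n with hn | hn
        · subst hn; simp [hf_def]
        · simp only [hf_def, if_neg (by omega : ¬ n = 0), if_neg (by omega : ¬ n = 0)]
          have hsn : Real.exp (-t * (n:ℝ)) = s ^ n := by
            rw [hs_def, ← Real.exp_nat_mul]; ring_nf
          rw [hsn, sub_zero, mul_pow]
          ring
        
      have hfnn : ∀ n : ℕ, 0 ≤ f n y := by
        intro n
        rcases Nat.eq_zero_or_pos n with hn | hn
        · subst hn; simp [hf_def]
        · simp only [hf_def, if_neg (by omega : ¬ n = 0)]
          positivity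
      have hfsummable : Summable fun n => f n y :=
        (hsum1.sub hsum2).congr fun n => (hfe n).symm
      have htsum : ∑' n : ℕ, f n y = Real.exp (-(1-s) * y) - Real.exp (-1 * y) := by
        calc ∑' n : ℕ, f n y
            = (∑' n : ℕ, (s * y) ^ n / (n.factorial : ℝ) * Real.exp (-y))
              - ∑' n : ℕ, (if n = 0 then Real.exp (-y) else 0) := by
              rw [← Summable.tsum_sub hsum1 hsum2]
              exact tsum_congr hfe
          _ = Real.exp (s * y) * Real.exp (-y) - Real.exp (-y) := by
              have hexp_tsum : Real.exp (s * y) = ∑' n : ℕ, (s * y) ^ n / (n.factorial : ℝ) :=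
                (congrFun Real.exp_eq_exp_ℝ (s * y)).trans
                  (congrFun (NormedSpace.exp_eq_tsum_div (𝔸 := ℝ)) (s * y))
              rw [tsum_ite_eq 0 (fun _ => Real.exp (-y)),
                (Real.summable_pow_div_factorial (s * y)).tsum_mul_right, ← hexp_tsum]
          _ = Real.exp (-(1-s) * y) - Real.exp (-1 * y) := by
              rw [← Real.exp_add]
              ring_nf
      beta_reduce
      rw [← htsum]
      exact (ENNReal.ofReal_tsum_of_nonneg hfnn hfsummable).symm
  -- Step 5: identify the real value
  have hIs := integ_one_sub_exp ν hν (x := 1 - s) h1s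
  have hI1 := integ_one_sub_exp ν hν (x := (1:ℝ)) zero_le_one
  have hfun_eq : (fun y => Real.exp (-(1-s) * y) - Real.exp (-1 * y))
      = fun y => (1 - Real.exp (-1 * y)) - (1 - Real.exp (-(1-s) * y)) := by
    funext y; ring
  have hint_diff : IntegrableOn (fun y => Real.exp (-(1-s) * y) - Real.exp (-1 * y)) (Ioi (0:ℝ)) ν := by
    rw [hfun_eq]
    exact hI1.sub hIs
  have hnn_diff : (0:ℝ→ℝ) ≤ᵐ[ν.restrict (Ioi 0)] fun y => Real.exp (-(1-s) * y) - Real.exp (-1 * y) := by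
    apply (ae_restrict_iff' measurableSet_Ioi).2
    apply Filter.Eventually.of_forall
    intro y hy
    have hy0 : (0:ℝ) < y := hy
    simp only [Pi.zero_apply, sub_nonneg]
    apply Real.exp_le_exp.2
    nlinarith
  have step5 : ∫⁻ y in Ioi (0:ℝ), ENNReal.ofReal (Real.exp (-(1-s) * y) - Real.exp (-1 * y)) ∂ν
      = ENNReal.ofReal (∫ y in Ioi (0:ℝ), (Real.exp (-(1-s) * y) - Real.exp (-1 * y)) ∂ν) :=
    (ofReal_integral_eq_lintegral_ofReal hint_diff hnn_diff).symm
  set J : ℝ := ∫ y in Ioi (0:ℝ), (Real.exp (-(1-s) * y) - Real.exp (-1 * y)) ∂ν with hJ_def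
  have hJnn : 0 ≤ J := by
    apply setIntegral_nonneg measurableSet_Ioi
    intro y hy
    have hy0 : (0:ℝ) < y := hy
    have : Real.exp (-1 * y) ≤ Real.exp (-(1-s) * y) := Real.exp_le_exp.2 (by nlinarith)
    linarith
  -- the total value
  have hE_eq : ∫ ω, Real.exp (-t * (R ω : ℝ)) ∂μ = s * b + J := by
    rw [step1, step2, tsum_congr step3, step4, step5,
      ← ENNReal.ofReal_add (by positivity) hJnn, ENNReal.toReal_ofReal (by positivity)]
  -- identify with 1 - φ (1 - s)
  have e1 := hφ 1 zero_le_one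
  have e2 := hφ (1 - s) h1s
  have hJ_eq : J = (∫ y in Ioi (0:ℝ), (1 - Real.exp (-1 * y)) ∂ν)
      - ∫ y in Ioi (0:ℝ), (1 - Real.exp (-(1-s) * y)) ∂ν := by
    rw [hJ_def]
    rw [show (fun y => Real.exp (-(1-s) * y) - Real.exp (-1 * y))
        = fun y => (1 - Real.exp (-1 * y)) - (1 - Real.exp (-(1-s) * y)) from hfun_eq]
    exact integral_sub hI1 hIs
  have hfinal : ∫ ω, Real.exp (-t * (R ω : ℝ)) ∂μ = 1 - φ (1 - s) := by
    rw [hE_eq, hJ_eq]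
    rw [hφ1] at e1
    linarith [e1, e2]
  rw [hfinal]
  exact key_ineq b ν hν φ hφ hφ1 ht
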